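/- arXiv:1011.6614 — 2 statements merged into one kernel-verified Lean document; each statement's English description precedes it below -/
import Mathlib

section
/- Let k ≥ 1 and S = ℂ⟦x,y,t₁,…,t_k⟧ (an integral domain of Krull dimension k+2). Let G ∈ S with G ≠ 0, and let J ⊆ S be an ideal such that the Krull dimension of S/J is at most k. If the product ideal ⟨G⟩·J is a radical ideal and every minimal prime p of ⟨G⟩·J satisfies dim S/p = k+1, then J = S; in particular ⟨G⟩·J = ⟨G⟩ and ⟨G⟩ is a radical ideal. -/
/-!
STATEMENT 2 (formal analogue of the paper's Remark after Example 3).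

In `S = ℂ⟦x,y,t₁,…,t_k⟧` (an integral domain of Krull dimension `k+2`), if
`G ≠ 0`, `dim S/J ≤ k`, the product ideal `⟨G⟩·J` is radical and all its
minimal primes have dimension `k+1`, then `J = S`; in particular
`⟨G⟩·J = ⟨G⟩` and `⟨G⟩` is radical.
-/

theorem reduced_pure_dimensional_total_space_forces_unit_embedded_part
    (k : ℕ) (hk : 1 ≤ k)
    (G : MvPowerSeries (Fin 2 ⊕ Fin k) ℂ) (hG : G ≠ 0)
    (J : Ideal (MvPowerSeries (Fin 2 ⊕ Fin k) ℂ))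
    (hJdim : ringKrullDim (MvPowerSeries (Fin 2 ⊕ Fin k) ℂ ⧸ J) ≤ (k : WithBot ℕ∞))
    (hrad : (Ideal.span {G} * J).IsRadical)
    (hpure : ∀ P ∈ (Ideal.span {G} * J).minimalPrimes,
      ringKrullDim (MvPowerSeries (Fin 2 ⊕ Fin k) ℂ ⧸ P) = ((k + 1 : ℕ) : WithBot ℕ∞)) :
    J = ⊤ ∧ Ideal.span {G} * J = Ideal.span {G} ∧ (Ideal.span {G}).IsRadical := by
  -- Every minimal prime of ⟨G⟩·J contains G.
  have hGP : ∀ P ∈ (Ideal.span {G} * J).minimalPrimes, G ∈ P := by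
    intro P hP
    obtain ⟨⟨hPprime, hPle⟩, -⟩ := id hP
    rcases (Ideal.IsPrime.mul_le hPprime).mp hPle with h | h
    · exact h (Ideal.mem_span_singleton_self G)
    · -- J ≤ P contradicts the dimensions
      exfalso
      have hsurj : Function.Surjective (Ideal.Quotient.factor h) := by
        intro x
        obtain ⟨a, rfl⟩ := Ideal.Quotient.mk_surjective x
        exact ⟨Ideal.Quotient.mk J a, rfl⟩
      have hle : ringKrullDim (MvPowerSeries (Fin 2 ⊕ Fin k) ℂ ⧸ P) ≤ ringKrullDim (MvPowerSeries (Fin 2 ⊕ Fin k) ℂ ⧸ J) :=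
        ringKrullDim_le_of_surjective _ hsurj
      rw [hpure P hP] at hle
      have : ((k + 1 : ℕ) : WithBot ℕ∞) ≤ (k : WithBot ℕ∞) := le_trans hle hJdim
      have : (k + 1 : ℕ) ≤ k := by exact_mod_cast this
      omega
  -- Hence G lies in the radical of ⟨G⟩·J, which equals ⟨G⟩·J.
  have hGmem : G ∈ Ideal.span {G} * J := by
    have h1 : G ∈ sInf (Ideal.span {G} * J).minimalPrimes :=
      Ideal.mem_sInf.mpr fun {P} hP => hGP P hP
    rw [Ideal.sInf_minimalPrimes, hrad.radical] at h1
    exact h1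
  obtain ⟨z, hz, hzG⟩ := Ideal.mem_span_singleton_mul.mp hGmem
  have hz1 : z = 1 := by
    have : G * z = G * 1 := by rw [mul_one]; exact hzG
    exact mul_left_cancel₀ hG this
  have hJtop : J = ⊤ := Ideal.eq_top_iff_one J |>.mpr (hz1 ▸ hz)
  refine ⟨hJtop, ?_, ?_⟩
  · rw [hJtop, Ideal.mul_top]
  · have := hrad
    rwa [hJtop, Ideal.mul_top] at this
end

section
/- In R = ℂ⟦x,y⟧, let I₀ = ⟨x²−y³⟩ ∩ ⟨y⟩ ∩ ⟨x, y⁵⟩. Then the radical of I₀ equals ⟨x²−y³⟩ ∩ ⟨y⟩ = ⟨y·(x²−y³)⟩, and the ℂ-vector space √I₀/I₀ has dimension 1. -/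
/-!
STATEMENT 4 (the computation `ε(X₀,0) = 1` of the paper's Example 1).

In `R = ℂ⟦x,y⟧`, for `I₀ = ⟨x²−y³⟩ ∩ ⟨y⟩ ∩ ⟨x,y⁵⟩` one has
`√I₀ = ⟨x²−y³⟩ ∩ ⟨y⟩ = ⟨y·(x²−y³)⟩` and `dim_ℂ √I₀/I₀ = 1`.
-/

noncomputable section

/-- The variable `x` of `R = ℂ⟦x,y⟧`. -/
def px : MvPowerSeries (Fin 2) ℂ := MvPowerSeries.X 0

/-- The variable `y` of `R = ℂ⟦x,y⟧`. -/
def py : MvPowerSeries (Fin 2) ℂ := MvPowerSeries.X 1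

/-- The ideal `I₀ = ⟨x²−y³⟩ ∩ ⟨y⟩ ∩ ⟨x,y⁵⟩` of `R = ℂ⟦x,y⟧`. -/
def I₀ : Ideal (MvPowerSeries (Fin 2) ℂ) :=
  Ideal.span {px ^ 2 - py ^ 3} ⊓ Ideal.span {py} ⊓
    Ideal.span {px, py ^ 5}

/-- The `ℂ`-vector space `A/B` for ideals of `R = ℂ⟦x,y⟧`: the quotient of `A`
by `A ∩ B`, with scalars restricted to `ℂ`. -/
def idealQuot (A B : Ideal (MvPowerSeries (Fin 2) ℂ)) : Type :=
  ↥(Submodule.restrictScalars ℂ A) ⧸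
    (Submodule.comap (Submodule.restrictScalars ℂ A).subtype (Submodule.restrictScalars ℂ B))

instance (A B : Ideal (MvPowerSeries (Fin 2) ℂ)) : AddCommGroup (idealQuot A B) :=
  inferInstanceAs (AddCommGroup (↥(Submodule.restrictScalars ℂ A) ⧸
    (Submodule.comap (Submodule.restrictScalars ℂ A).subtype (Submodule.restrictScalars ℂ B))))

instance (A B : Ideal (MvPowerSeries (Fin 2) ℂ)) : Module ℂ (idealQuot A B) :=
  inferInstanceAs (Module ℂ (↥(Submodule.restrictScalars ℂ A) ⧸
    (Submodule.comap (Submodule.restrictScalars ℂ A).subtype (Submodule.restrictScalars ℂ B))))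

namespace Ex1

open MvPowerSeries Finset


abbrev R2 := MvPowerSeries (Fin 2) ℂ

/-- the exponent `(i, j)` as a finsupp on `Fin 2`. -/
def D (i j : ℕ) : Fin 2 →₀ ℕ := Finsupp.single 0 i + Finsupp.single 1 j

@[simp] lemma D_apply0 (i j : ℕ) : D i j 0 = i := by
  simp [D, Finsupp.single_apply]

@[simp] lemma D_apply1 (i j : ℕ) : D i j 1 = j := by
  simp [D, Finsupp.single_apply]

lemma eq_D (v : Fin 2 →₀ ℕ) : v = D (v 0) (v 1) := by
  ext s
  match s with
  | 0 => simp
  | 1 => simp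

lemma D_inj {i j i' j' : ℕ} (h : D i j = D i' j') : i = i' ∧ j = j' := by
  constructor
  · simpa using congrArg (fun v => v 0) h
  · simpa using congrArg (fun v => v 1) h

lemma D_le_iff {i j : ℕ} {v : Fin 2 →₀ ℕ} : D i j ≤ v ↔ i ≤ v 0 ∧ j ≤ v 1 := by
  rw [Finsupp.le_def]
  rw [Fin.forall_fin_two]
  simp

lemma D_add (i j i' j' : ℕ) : D i j + D i' j' = D (i + i') (j + j') := by
  ext s
  match s with
  | 0 => simp
  | 1 => simp

lemma single0 (i : ℕ) : Finsupp.single (0 : Fin 2) i = D i 0 := by simp [D]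
lemma single1 (j : ℕ) : Finsupp.single (1 : Fin 2) j = D 0 j := by simp [D]


/-- weighted degree -/
def wdeg (w : ℕ × ℕ) (v : Fin 2 →₀ ℕ) : ℕ := w.1 * v 0 + w.2 * v 1

lemma wdeg_add (w : ℕ × ℕ) (p q : Fin 2 →₀ ℕ) : wdeg w (p + q) = wdeg w p + wdeg w q := by
  simp [wdeg]; ring

/-- the finset of exponents of weighted degree `n` -/
def S (w : ℕ × ℕ) (n : ℕ) : Finset (Fin 2 →₀ ℕ) :=
  (Finset.Iic (D n n)).filter (fun v => wdeg w v = n)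

lemma mem_S {w : ℕ × ℕ} (hw1 : 1 ≤ w.1) (hw2 : 1 ≤ w.2) {n : ℕ} {v : Fin 2 →₀ ℕ} :
    v ∈ S w n ↔ wdeg w v = n := by
  constructor
  · intro h; exact (Finset.mem_filter.mp h).2
  · intro h
    refine Finset.mem_filter.mpr ⟨Finset.mem_Iic.mpr ?_, h⟩
    rw [Finsupp.le_def, Fin.forall_fin_two]
    simp only [D_apply0, D_apply1]
    unfold wdeg at h
    constructor
    · nlinarith [Nat.le_mul_of_pos_left (v 0) (show 0 < w.1 by omega)]
    · nlinarith [Nat.le_mul_of_pos_left (v 1) (show 0 < w.2 by omega)]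

/-- the coefficient of `tⁿ` in the substitution `x ↦ c₁ t^{w₁}, y ↦ c₂ t^{w₂}`. -/
def L (c : ℂ × ℂ) (w : ℕ × ℕ) (n : ℕ) (g : R2) : ℂ :=
  ∑ v ∈ S w n, MvPowerSeries.coeff v g * c.1 ^ v 0 * c.2 ^ v 1

lemma L_mul {c : ℂ × ℂ} {w : ℕ × ℕ} (hw1 : 1 ≤ w.1) (hw2 : 1 ≤ w.2) (a b : R2) (n : ℕ) :
    L c w n (a * b) = ∑ p ∈ Finset.HasAntidiagonal.antidiagonal n, L c w p.1 a * L c w p.2 b := by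
  have key : ∀ (p q : Fin 2 →₀ ℕ),
      (MvPowerSeries.coeff p a * c.1 ^ p 0 * c.2 ^ p 1) *
        (MvPowerSeries.coeff q b * c.1 ^ q 0 * c.2 ^ q 1) =
      MvPowerSeries.coeff p a * MvPowerSeries.coeff q b *
        c.1 ^ ((p + q) 0) * c.2 ^ ((p + q) 1) := by
    intro p q
    simp only [Finsupp.add_apply, pow_add]
    ring
  calc L c w n (a * b)
      = ∑ v ∈ S w n, ∑ pq ∈ Finset.HasAntidiagonal.antidiagonal v,
          (MvPowerSeries.coeff pq.1 a * c.1 ^ pq.1 0 * c.2 ^ pq.1 1) *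
          (MvPowerSeries.coeff pq.2 b * c.1 ^ pq.2 0 * c.2 ^ pq.2 1) := by
        unfold L
        refine Finset.sum_congr rfl fun v hv => ?_
        rw [MvPowerSeries.coeff_mul, Finset.sum_mul, Finset.sum_mul]
        refine Finset.sum_congr rfl fun pq hpq => ?_
        rw [Finset.HasAntidiagonal.mem_antidiagonal] at hpq
        rw [key, hpq]
    _ = ∑ x ∈ (S w n).sigma (fun v => Finset.HasAntidiagonal.antidiagonal v),
          (MvPowerSeries.coeff x.2.1 a * c.1 ^ x.2.1 0 * c.2 ^ x.2.1 1) *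
          (MvPowerSeries.coeff x.2.2 b * c.1 ^ x.2.2 0 * c.2 ^ x.2.2 1) :=
        by rw [Finset.sum_sigma]
    _ = ∑ x ∈ (Finset.HasAntidiagonal.antidiagonal n).sigma (fun p => (S w p.1) ×ˢ (S w p.2)),
          (MvPowerSeries.coeff x.2.1 a * c.1 ^ x.2.1 0 * c.2 ^ x.2.1 1) *
          (MvPowerSeries.coeff x.2.2 b * c.1 ^ x.2.2 0 * c.2 ^ x.2.2 1) := by
        refine Finset.sum_nbij'
          (fun x => ⟨(wdeg w x.2.1, wdeg w x.2.2), x.2⟩)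
          (fun x => ⟨x.2.1 + x.2.2, x.2⟩) ?_ ?_ ?_ ?_ ?_
        · rintro ⟨v, p, q⟩ hx
          simp only [Finset.mem_sigma, Finset.HasAntidiagonal.mem_antidiagonal, Finset.mem_product] at hx ⊢
          obtain ⟨hv, hpq⟩ := hx
          rw [mem_S hw1 hw2] at hv
          exact ⟨by rw [← wdeg_add, hpq, hv],
            (mem_S hw1 hw2).mpr rfl, (mem_S hw1 hw2).mpr rfl⟩
        · rintro ⟨⟨n1, n2⟩, p, q⟩ hx
          simp only [Finset.mem_sigma, Finset.HasAntidiagonal.mem_antidiagonal, Finset.mem_product] at hx ⊢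
          obtain ⟨hn, hp, hq⟩ := hx
          rw [mem_S hw1 hw2] at hp hq
          exact ⟨(mem_S hw1 hw2).mpr (by rw [wdeg_add, hp, hq, hn]), by simp⟩
        · rintro ⟨v, p, q⟩ hx
          simp only [Finset.mem_sigma, Finset.HasAntidiagonal.mem_antidiagonal] at hx
          simp [hx.2]
        · rintro ⟨⟨n1, n2⟩, p, q⟩ hx
          simp only [Finset.mem_sigma, Finset.HasAntidiagonal.mem_antidiagonal, Finset.mem_product] at hx
          obtain ⟨hn, hp, hq⟩ := hx
          rw [mem_S hw1 hw2] at hp hq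
          simp [hp, hq]
        · rintro ⟨v, p, q⟩ _
          rfl
    _ = ∑ p ∈ Finset.HasAntidiagonal.antidiagonal n, ∑ z ∈ (S w p.1) ×ˢ (S w p.2),
          (MvPowerSeries.coeff z.1 a * c.1 ^ z.1 0 * c.2 ^ z.1 1) *
          (MvPowerSeries.coeff z.2 b * c.1 ^ z.2 0 * c.2 ^ z.2 1) :=
        by rw [Finset.sum_sigma]
    _ = ∑ p ∈ Finset.HasAntidiagonal.antidiagonal n, L c w p.1 a * L c w p.2 b := by
        refine Finset.sum_congr rfl fun p _ => ?_
        unfold L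
        rw [Finset.sum_mul_sum, Finset.sum_product]



lemma prime_of_L (d : R2) (hd0 : d ≠ 0) (hdnu : ¬IsUnit d) (c : ℂ × ℂ) (w : ℕ × ℕ)
    (hw1 : 1 ≤ w.1) (hw2 : 1 ≤ w.2)
    (hchar : ∀ g : R2, d ∣ g ↔ ∀ n, L c w n g = 0) : Prime d := by
  refine ⟨hd0, hdnu, fun a b hab => ?_⟩
  by_contra hcon
  push_neg at hcon
  obtain ⟨ha, hb⟩ := hcon
  rw [hchar] at ha hb hab
  push_neg at ha hb
  have hae : ∃ n, L c w n a ≠ 0 := ha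
  have hbe : ∃ n, L c w n b ≠ 0 := hb
  classical
  let n1 := Nat.find hae
  let n2 := Nat.find hbe
  have h1 : L c w n1 a ≠ 0 := Nat.find_spec hae
  have h2 : L c w n2 b ≠ 0 := Nat.find_spec hbe
  have hmin1 : ∀ m < n1, L c w m a = 0 := fun m hm => by
    have := Nat.find_min hae hm; simpa using this
  have hmin2 : ∀ m < n2, L c w m b = 0 := fun m hm => by
    have := Nat.find_min hbe hm; simpa using this
  have key : L c w (n1 + n2) (a * b) = L c w n1 a * L c w n2 b := by
    rw [L_mul hw1 hw2]
    rw [Finset.sum_eq_single (n1, n2)]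
    · rintro ⟨m1, m2⟩ hm hne
      rw [Finset.HasAntidiagonal.mem_antidiagonal] at hm
      rcases lt_or_ge m1 n1 with h | h
      · rw [hmin1 m1 h, zero_mul]
      · have : m2 < n2 := by
          rcases lt_or_eq_of_le h with h' | h'
          · omega
          · exfalso; apply hne; simp only [Prod.mk.injEq]; omega
        rw [hmin2 m2 this, mul_zero]
    · intro h
      exact absurd (Finset.HasAntidiagonal.mem_antidiagonal.mpr (by simp)) h
  rw [hab] at key
  exact h1 (by
    rcases mul_eq_zero.mp key.symm with h | h
    · exact h
    · exact absurd h h2)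

lemma L_y (n : ℕ) (g : R2) :
    L (1, 0) (1, 1) n g = MvPowerSeries.coeff (D n 0) g := by
  unfold L
  rw [Finset.sum_eq_single (D n 0)]
  · simp
  · intro v hv hne
    rw [mem_S le_rfl le_rfl] at hv
    rcases Nat.eq_zero_or_pos (v 1) with h1 | h1
    · exfalso
      apply hne
      rw [eq_D v, h1]
      have : v 0 = n := by unfold wdeg at hv; simp at hv; omega
      rw [this]
    · simp [zero_pow (by omega : v 1 ≠ 0)]
  · intro h
    exfalso
    apply h
    rw [mem_S le_rfl le_rfl]
    unfold wdeg
    simp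

lemma char_y (g : R2) : (py ∣ g) ↔ ∀ n, L (1, 0) (1, 1) n g = 0 := by
  rw [py, MvPowerSeries.X_dvd_iff]
  constructor
  · intro h n
    rw [L_y]
    exact h (D n 0) (by simp)
  · intro h m hm
    have := h (m 0)
    rw [L_y] at this
    rw [eq_D m, hm]
    simpa using this

lemma fpoly_eq : px ^ 2 - py ^ 3 =
    (MvPowerSeries.monomial (D 2 0)) 1 - (MvPowerSeries.monomial (D 0 3)) 1 := by
  rw [px, py, MvPowerSeries.X_pow_eq, MvPowerSeries.X_pow_eq, single0, single1]

lemma L_fpoly (n : ℕ) : L (1, 1) (3, 2) n (px ^ 2 - py ^ 3) = 0 := by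
  unfold L
  rw [fpoly_eq]
  simp only [map_sub, MvPowerSeries.coeff_monomial, one_pow, mul_one]
  rw [Finset.sum_sub_distrib]
  rw [Finset.sum_ite_eq' (S (3,2) n) (D 2 0) (fun _ => (1 : ℂ))]
  rw [Finset.sum_ite_eq' (S (3,2) n) (D 0 3) (fun _ => (1 : ℂ))]
  have h1 : D 2 0 ∈ S (3,2) n ↔ n = 6 := by
    rw [mem_S (by norm_num) (by norm_num)]
    unfold wdeg
    simp
    omega
  have h2 : D 0 3 ∈ S (3,2) n ↔ n = 6 := by
    rw [mem_S (by norm_num) (by norm_num)]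
    unfold wdeg
    simp
    omega
  by_cases hn : n = 6
  · rw [if_pos (h1.mpr hn), if_pos (h2.mpr hn), sub_self]
  · rw [if_neg (fun h => hn (h1.mp h)), if_neg (fun h => hn (h2.mp h)), sub_self]

/-- the sum of coefficients of `g` along the line `3i + 2j = n`, as a `range` sum,
for `i₀ ≤ 1`. -/
lemma L_line (g : R2) (i0 j : ℕ) (hi0 : i0 ≤ 1) :
    L (1, 1) (3, 2) (3 * i0 + 2 * j) g =
      ∑ k ∈ Finset.range (j / 3 + 1), MvPowerSeries.coeff (D (i0 + 2 * k) (j - 3 * k)) g := by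
  unfold L
  refine Finset.sum_nbij' (fun v => (v 0 - i0) / 2) (fun k => D (i0 + 2 * k) (j - 3 * k))
    ?_ ?_ ?_ ?_ ?_
  · intro v hv
    rw [mem_S (by norm_num) (by norm_num)] at hv
    unfold wdeg at hv
    simp only [Finset.mem_range]
    omega
  · intro k hk
    rw [Finset.mem_range] at hk
    rw [mem_S (by norm_num) (by norm_num)]
    unfold wdeg
    simp only [D_apply0, D_apply1]
    omega
  · intro v hv
    rw [mem_S (by norm_num) (by norm_num)] at hv
    unfold wdeg at hv
    show D (i0 + 2 * ((v 0 - i0) / 2)) (j - 3 * ((v 0 - i0) / 2)) = v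
    have h0 : i0 + 2 * ((v 0 - i0) / 2) = v 0 := by omega
    have h1 : j - 3 * ((v 0 - i0) / 2) = v 1 := by omega
    rw [h0, h1]
    exact (eq_D v).symm
  · intro k hk
    rw [Finset.mem_range] at hk
    simp only [D_apply0]
    omega
  · intro v hv
    rw [mem_S (by norm_num) (by norm_num)] at hv
    unfold wdeg at hv
    have h0 : i0 + 2 * ((v 0 - i0) / 2) = v 0 := by omega
    have h1 : j - 3 * ((v 0 - i0) / 2) = v 1 := by omega
    rw [h0, h1, ← eq_D]
    simp

lemma char_f (g : R2) : (px ^ 2 - py ^ 3 ∣ g) ↔ ∀ n, L (1, 1) (3, 2) n g = 0 := by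
  constructor
  · rintro ⟨q, rfl⟩ n
    rw [L_mul (by norm_num) (by norm_num)]
    refine Finset.sum_eq_zero fun p _ => ?_
    rw [L_fpoly, zero_mul]
  · intro h
    -- the quotient
    set G : ℕ → ℕ → ℂ := fun i j => MvPowerSeries.coeff (D i j) g with hG
    set Q : ℕ → ℕ → ℂ := fun i j =>
      ∑ k ∈ Finset.range (j / 3 + 1), G (i + 2 * k + 2) (j - 3 * k) with hQ
    -- the key consequence of the hypothesis, for i0 ≤ 1
    have hker : ∀ i0 j, i0 ≤ 1 →
        ∑ k ∈ Finset.range (j / 3 + 1), G (i0 + 2 * k) (j - 3 * k) = 0 := by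
      intro i0 j hi0
      rw [← L_line g i0 j hi0]
      exact h _
    refine ⟨(id (α := MvPowerSeries (Fin 2) ℂ) (fun v => Q (v 0) (v 1))), ?_⟩
    ext v
    have hcq : ∀ u : Fin 2 →₀ ℕ,
        MvPowerSeries.coeff u (id (α := MvPowerSeries (Fin 2) ℂ) (fun v => Q (v 0) (v 1)))
          = Q (u 0) (u 1) := fun u => rfl
    rw [fpoly_eq, sub_mul, map_sub,
      MvPowerSeries.coeff_monomial_mul, MvPowerSeries.coeff_monomial_mul]
    simp only [one_mul, hcq]
    have hgv : MvPowerSeries.coeff v g = G (v 0) (v 1) := by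
      rw [hG]; rw [eq_D v]; simp [← eq_D]
    rw [hgv]
    set i := v 0
    set j := v 1
    have hle1 : D 2 0 ≤ v ↔ 2 ≤ i := by rw [D_le_iff]; omega
    have hle2 : D 0 3 ≤ v ↔ 3 ≤ j := by rw [D_le_iff]; omega
    have hsub1 : (v - D 2 0) 0 = i - 2 ∧ (v - D 2 0) 1 = j := by
      constructor <;> simp [Finsupp.tsub_apply] <;> rfl
    have hsub2 : (v - D 0 3) 0 = i ∧ (v - D 0 3) 1 = j - 3 := by
      constructor <;> simp [Finsupp.tsub_apply] <;> rfl
    -- now a purely numeric goal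
    by_cases h2 : 2 ≤ i
    · rw [if_pos (hle1.mpr h2), hsub1.1, hsub1.2]
      -- Q (i-2) j = G i j + (if 3 ≤ j then Q i (j-3) else 0)
      have expand : Q (i - 2) j =
          G i j + ∑ k ∈ Finset.range (j / 3), G (i + 2 * (k + 1)) (j - 3 * (k + 1)) := by
        simp only [hQ]
        rw [Finset.sum_range_succ']
        rw [add_comm]
        congr 1
        · congr 1
          omega
        · refine Finset.sum_congr rfl fun k _ => ?_
          congr 1 <;> omega
      by_cases h3 : 3 ≤ j
      · rw [if_pos (hle2.mpr h3), hsub2.1, hsub2.2, expand]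
        have : Q i (j - 3) =
            ∑ k ∈ Finset.range (j / 3), G (i + 2 * (k + 1)) (j - 3 * (k + 1)) := by
          simp only [hQ]
          have hr : (j - 3) / 3 + 1 = j / 3 := by omega
          rw [hr]
          refine Finset.sum_congr rfl fun k hk => ?_
          rw [Finset.mem_range] at hk
          congr 1 <;> omega
        rw [this]
        ring
      · rw [if_neg (fun hh => h3 (hle2.mp hh)), expand]
        have : Finset.range (j / 3) = ∅ := by
          rw [Finset.range_eq_empty_iff]
          omega
        rw [this, Finset.sum_empty, add_zero, sub_zero]
    · rw [if_neg (fun hh => h2 (hle1.mp hh))]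
      have hker' := hker i j (by omega)
      rw [Finset.sum_range_succ'] at hker'
      simp only [Nat.mul_zero, Nat.add_zero, Nat.sub_zero] at hker'
      by_cases h3 : 3 ≤ j
      · rw [if_pos (hle2.mpr h3), hsub2.1, hsub2.2]
        have : Q i (j - 3) =
            ∑ k ∈ Finset.range (j / 3), G (i + 2 * (k + 1)) (j - 3 * (k + 1)) := by
          simp only [hQ]
          have hr : (j - 3) / 3 + 1 = j / 3 := by omega
          rw [hr]
          refine Finset.sum_congr rfl fun k hk => ?_
          rw [Finset.mem_range] at hk
          congr 1 <;> omega
        rw [this]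
        have : ∑ k ∈ Finset.range (j / 3), G (i + 2 * (k + 1)) (j - 3 * (k + 1)) = - G i j := by
          have := hker'
          linear_combination hker'
        rw [this]
        ring
      · have : Finset.range (j / 3) = ∅ := by
          rw [Finset.range_eq_empty_iff]
          omega
        rw [this, Finset.sum_empty, zero_add] at hker'
        rw [if_neg (fun hh => h3 (hle2.mp hh))]
        rw [hker']
        ring

lemma D23_ne : D 2 0 ≠ D 0 3 := fun h => by have := (D_inj h).1; omega

lemma coeff_f_20 : MvPowerSeries.coeff (D 2 0) (px ^ 2 - py ^ 3) = 1 := by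
  rw [fpoly_eq, map_sub, MvPowerSeries.coeff_monomial, MvPowerSeries.coeff_monomial,
    if_pos rfl, if_neg D23_ne]
  norm_num

lemma f_ne_zero : px ^ 2 - py ^ 3 ≠ 0 := by
  intro h
  have := coeff_f_20
  rw [h] at this
  simp at this

lemma f_not_unit : ¬IsUnit (px ^ 2 - py ^ 3) := by
  intro h
  have h2 := h.map (MvPowerSeries.constantCoeff (σ := Fin 2) (R := ℂ))
  rw [map_sub, map_pow, map_pow, px, py, MvPowerSeries.constantCoeff_X,
    MvPowerSeries.constantCoeff_X] at h2
  norm_num at h2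

lemma prime_f : Prime (px ^ 2 - py ^ 3) :=
  prime_of_L _ f_ne_zero f_not_unit (1, 1) (3, 2) (by norm_num) (by norm_num) char_f

lemma coeff_y_01 : MvPowerSeries.coeff (D 0 1) py = 1 := by
  rw [py, MvPowerSeries.X_def, single1, MvPowerSeries.coeff_monomial, if_pos rfl]

lemma y_ne_zero : py ≠ 0 := by
  intro h
  have := coeff_y_01
  rw [h] at this
  simp at this

lemma y_not_unit : ¬IsUnit py := by
  intro h
  have h2 := h.map (MvPowerSeries.constantCoeff (σ := Fin 2) (R := ℂ))
  rw [py, MvPowerSeries.constantCoeff_X] at h2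
  norm_num at h2

lemma prime_y : Prime py :=
  prime_of_L _ y_ne_zero y_not_unit (1, 0) (1, 1) le_rfl le_rfl char_y

lemma py_not_dvd_f : ¬ py ∣ (px ^ 2 - py ^ 3) := by
  intro hdvd
  have hdvd' : (MvPowerSeries.X 1 : R2) ∣ (px ^ 2 - py ^ 3) := hdvd
  have h := MvPowerSeries.X_dvd_iff.mp hdvd' (D 2 0) (by simp)
  rw [coeff_f_20] at h
  norm_num at h

/-- part (B): the intersection is principal. -/
lemma inf_eq_span : Ideal.span {px ^ 2 - py ^ 3} ⊓ Ideal.span {py} =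
    Ideal.span {py * (px ^ 2 - py ^ 3)} := by
  apply le_antisymm
  · intro g hg
    obtain ⟨hf, hy⟩ := Submodule.mem_inf.mp hg
    rw [Ideal.mem_span_singleton] at hf hy ⊢
    obtain ⟨k, rfl⟩ := hf
    rcases (prime_y.2.2 _ _ hy) with h | h
    · exact absurd h py_not_dvd_f
    · obtain ⟨k', rfl⟩ := h
      exact ⟨k', by ring⟩
  · rw [Ideal.span_le, Set.singleton_subset_iff]
    refine Submodule.mem_inf.mpr ⟨?_, ?_⟩
    · exact Ideal.mem_span_singleton.mpr ⟨py, mul_comm _ _⟩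
    · exact Ideal.mem_span_singleton.mpr ⟨px ^ 2 - py ^ 3, rfl⟩

/-- part (A): the radical. -/
lemma radical_eq : I₀.radical = Ideal.span {px ^ 2 - py ^ 3} ⊓ Ideal.span {py} := by
  have hf : I₀ ≤ Ideal.span {px ^ 2 - py ^ 3} := inf_le_left.trans inf_le_left
  have hy : I₀ ≤ Ideal.span {py} := inf_le_left.trans inf_le_right
  have hfp : (Ideal.span {px ^ 2 - py ^ 3}).IsPrime :=
    (Ideal.span_singleton_prime f_ne_zero).mpr prime_f
  have hyp : (Ideal.span {py}).IsPrime :=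
    (Ideal.span_singleton_prime y_ne_zero).mpr prime_y
  apply le_antisymm
  · refine le_inf ?_ ?_
    · calc I₀.radical ≤ (Ideal.span {px ^ 2 - py ^ 3}).radical := Ideal.radical_mono hf
        _ = _ := hfp.radical
    · calc I₀.radical ≤ (Ideal.span {py}).radical := Ideal.radical_mono hy
        _ = _ := hyp.radical
  · rw [inf_eq_span, Ideal.span_le, Set.singleton_subset_iff]
    refine Ideal.mem_radical_iff.mpr ⟨2, ?_⟩
    refine Submodule.mem_inf.mpr ⟨Submodule.mem_inf.mpr ⟨?_, ?_⟩, ?_⟩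
    · exact Ideal.mem_span_singleton.mpr ⟨py ^ 2 * (px ^ 2 - py ^ 3), by ring⟩
    · exact Ideal.mem_span_singleton.mpr ⟨py * (px ^ 2 - py ^ 3) ^ 2, by ring⟩
    · exact Ideal.mem_span_pair.mpr
        ⟨px ^ 3 * py ^ 2 - 2 * px * py ^ 5, py ^ 3, by ring⟩

lemma coeff_w_04 : MvPowerSeries.coeff (D 0 4) (py * (px ^ 2 - py ^ 3)) = -1 := by
  have hw : py * (px ^ 2 - py ^ 3) =
      (MvPowerSeries.monomial (D 2 1)) 1 - (MvPowerSeries.monomial (D 0 4)) 1 := by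
    rw [mul_sub]
    congr 1
    · rw [px, py, MvPowerSeries.X_pow_eq, MvPowerSeries.X_def,
        MvPowerSeries.monomial_mul_monomial, one_mul, single1, single0, D_add]
    · rw [show py * py ^ 3 = py ^ 4 by ring, py, MvPowerSeries.X_pow_eq, single1]
  rw [hw, map_sub, MvPowerSeries.coeff_monomial, MvPowerSeries.coeff_monomial,
    if_neg (fun h => by have := (D_inj h).1; omega), if_pos rfl]
  norm_num

lemma w_not_mem_pair : py * (px ^ 2 - py ^ 3) ∉ Ideal.span ({px, py ^ 5} :
    Set (MvPowerSeries (Fin 2) ℂ)) := by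
  intro hmem
  obtain ⟨a, b, hab⟩ := Ideal.mem_span_pair.mp hmem
  have h := congrArg (MvPowerSeries.coeff (D 0 4)) hab
  rw [map_add, coeff_w_04] at h
  have h1 : MvPowerSeries.coeff (D 0 4) (a * px) = 0 := by
    rw [px, MvPowerSeries.X_def, MvPowerSeries.coeff_mul_monomial,
      if_neg (fun hle => by rw [single0, D_le_iff] at hle; simp only [D_apply0, D_apply1] at hle; omega)]
  have h2 : MvPowerSeries.coeff (D 0 4) (b * py ^ 5) = 0 := by
    rw [py, MvPowerSeries.X_pow_eq, MvPowerSeries.coeff_mul_monomial,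
      if_neg (fun hle => by rw [single1, D_le_iff] at hle; simp only [D_apply0, D_apply1] at hle; omega)]
  rw [h1, h2] at h
  norm_num at h

/-- `y(x²−y³)` times the maximal ideal lands in `⟨x, y⁵⟩`. -/
lemma w_mul_mem_pair (r : R2) (hr : MvPowerSeries.constantCoeff (σ := Fin 2) (R := ℂ) r = 0) :
    py * (px ^ 2 - py ^ 3) * r ∈ Ideal.span ({px, py ^ 5} :
      Set (MvPowerSeries (Fin 2) ℂ)) := by
  -- split r = px * a + py * b
  classical
  set sl : R2 := id (α := R2) (fun m => if m 0 = 0 then MvPowerSeries.coeff m r else 0) with hsl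
  have hx : px ∣ (r - sl) := by
    rw [px, MvPowerSeries.X_dvd_iff]
    intro m hm
    rw [map_sub]
    have : MvPowerSeries.coeff m sl = MvPowerSeries.coeff m r := by
      show (if m 0 = 0 then MvPowerSeries.coeff m r else 0) = _
      rw [if_pos hm]
    rw [this, sub_self]
  have hy : py ∣ sl := by
    rw [py, MvPowerSeries.X_dvd_iff]
    intro m hm
    show (if m 0 = 0 then MvPowerSeries.coeff m r else 0) = _
    by_cases h0 : m 0 = 0
    · rw [if_pos h0]
      have hm0 : m = 0 := by
        ext s
        match s with
        | 0 => exact h0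
        | 1 => exact hm
      rw [hm0]
      exact hr
    · rw [if_neg h0]
  obtain ⟨a, ha⟩ := hx
  obtain ⟨b, hb⟩ := hy
  have hr' : r = px * a + py * b := by
    have : r - sl = px * a := ha
    rw [← hb]
    linear_combination this
  rw [hr']
  exact Ideal.mem_span_pair.mpr
    ⟨py * (px ^ 2 - py ^ 3) * a + px * py ^ 2 * b, -b, by ring⟩

lemma finrank_part : Module.finrank ℂ
    (idealQuot (Ideal.span {py * (px ^ 2 - py ^ 3)}) I₀) = 1 := by
  classical
  set J := Ideal.span {py * (px ^ 2 - py ^ 3)} with hJ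
  set A := Submodule.restrictScalars ℂ J with hA
  set B := Submodule.comap A.subtype (Submodule.restrictScalars ℂ I₀) with hB
  show Module.finrank ℂ (A ⧸ B) = 1
  have hw : py * (px ^ 2 - py ^ 3) ∈ A := Ideal.mem_span_singleton_self _
  set v : A ⧸ B := Submodule.Quotient.mk ⟨py * (px ^ 2 - py ^ 3), hw⟩ with hv
  have hvne : v ≠ 0 := by
    intro h
    rw [hv, Submodule.Quotient.mk_eq_zero, hB, Submodule.mem_comap] at h
    have hmem : py * (px ^ 2 - py ^ 3) ∈ I₀ := h
    exact w_not_mem_pair hmem.2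
  refine (finrank_eq_one_iff_of_nonzero' v hvne).mpr ?_
  intro wq
  obtain ⟨⟨g, hg⟩, rfl⟩ := Submodule.Quotient.mk_surjective B wq
  obtain ⟨r, rfl⟩ := Ideal.mem_span_singleton.mp hg
  refine ⟨MvPowerSeries.constantCoeff (σ := Fin 2) (R := ℂ) r, ?_⟩
  set c := MvPowerSeries.constantCoeff (σ := Fin 2) (R := ℂ) r with hc
  rw [hv, ← Submodule.Quotient.mk_smul, Submodule.Quotient.eq]
  rw [hB, Submodule.mem_comap]
  have hcoe : (c • (⟨py * (px ^ 2 - py ^ 3), hw⟩ : A) -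
      ⟨py * (px ^ 2 - py ^ 3) * r, hg⟩ : A).1 =
      c • (py * (px ^ 2 - py ^ 3)) - py * (px ^ 2 - py ^ 3) * r := rfl
  show (c • (py * (px ^ 2 - py ^ 3)) - py * (px ^ 2 - py ^ 3) * r) ∈
    Submodule.restrictScalars ℂ I₀
  have hkey : c • (py * (px ^ 2 - py ^ 3)) - py * (px ^ 2 - py ^ 3) * r =
      -(py * (px ^ 2 - py ^ 3) * (r - MvPowerSeries.C (σ := Fin 2) (R := ℂ) c)) := by
    rw [MvPowerSeries.smul_eq_C_mul]
    ring
  rw [hkey]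
  refine neg_mem ?_
  have hrc : MvPowerSeries.constantCoeff (σ := Fin 2) (R := ℂ) (r - MvPowerSeries.C (σ := Fin 2) (R := ℂ) c) = 0 := by
    rw [map_sub, MvPowerSeries.constantCoeff_C, ← hc, sub_self]
  refine Submodule.mem_inf.mpr ⟨Submodule.mem_inf.mpr ⟨?_, ?_⟩, ?_⟩
  · exact Ideal.mem_span_singleton.mpr
      ⟨py * (r - MvPowerSeries.C (σ := Fin 2) (R := ℂ) c), by ring⟩
  · exact Ideal.mem_span_singleton.mpr
      ⟨(px ^ 2 - py ^ 3) * (r - MvPowerSeries.C (σ := Fin 2) (R := ℂ) c), by ring⟩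
  · exact w_mul_mem_pair _ hrc

end Ex1

theorem radical_and_epsilon_of_example_one :
    I₀.radical = Ideal.span {px ^ 2 - py ^ 3} ⊓ Ideal.span {py} ∧
      Ideal.span {px ^ 2 - py ^ 3} ⊓ Ideal.span {py} =
        Ideal.span {py * (px ^ 2 - py ^ 3)} ∧
      Module.finrank ℂ (idealQuot I₀.radical I₀) = 1 := by
  refine ⟨Ex1.radical_eq, Ex1.inf_eq_span, ?_⟩
  rw [Ex1.radical_eq, Ex1.inf_eq_span]
  exact Ex1.finrank_part

end
end
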